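/- arXiv:0903.1157 — 2 statements merged into one kernel-verified Lean document; each statement's English description precedes it below -/
import Mathlib

section
/- For u uniform in the unit ball of ℝ³ and a fixed vector ζ ∈ ℝ³ with |ζ| = ρ > 0, the expectation E(e^{-ζ·u}) = (3/ρ³)·(ρ cosh(ρ) − sinh(ρ)). -/
open Real MeasureTheory

lemma aux_disk (s : ℝ) :
    volume {y : Fin 2 → ℝ | ∑ i, y i ^ 2 ≤ s} = ENNReal.ofReal (π * s) := by
  rcases lt_or_ge s 0 with hs | hs
  · have : {y : Fin 2 → ℝ | ∑ i, y i ^ 2 ≤ s} = ∅ := by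
      ext y
      simp only [Set.mem_setOf_eq, Set.mem_empty_iff_false, iff_false, not_le]
      exact lt_of_lt_of_le hs (Finset.sum_nonneg fun i _ => sq_nonneg _)
    rw [this, measure_empty, eq_comm, ENNReal.ofReal_eq_zero]
    exact mul_nonpos_of_nonneg_of_nonpos pi_pos.le hs.le
  · have hpre : (MeasurableEquiv.toLp 2 (Fin 2 → ℝ)).symm.symm ⁻¹'
        (Metric.closedBall (0 : EuclideanSpace ℝ (Fin 2)) (Real.sqrt s))
        = {y : Fin 2 → ℝ | ∑ i, y i ^ 2 ≤ s} := by
      ext y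
      simp only [Set.mem_preimage, Metric.mem_closedBall, dist_zero_right, Set.mem_setOf_eq,
        EuclideanSpace.norm_eq, Real.norm_eq_abs, sq_abs]
      have hyv : ∀ i, ((MeasurableEquiv.toLp 2 (Fin 2 → ℝ)).symm.symm y) i = y i := fun i => rfl
      simp_rw [hyv]
      rw [show Real.sqrt s = Real.sqrt s from rfl]
      constructor
      · intro h
        calc ∑ i, y i ^ 2 = Real.sqrt (∑ i, y i ^2) ^ 2 := by
                rw [Real.sq_sqrt (Finset.sum_nonneg fun i _ => sq_nonneg _)]
            _ ≤ Real.sqrt s ^ 2 := pow_le_pow_left₀ (Real.sqrt_nonneg _) h 2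
            _ = s := Real.sq_sqrt hs
      · intro h
        exact Real.sqrt_le_sqrt h
    rw [← hpre, ((EuclideanSpace.volume_preserving_symm_measurableEquiv_toLp (Fin 2)).symm).measure_preimage
      measurableSet_closedBall.nullMeasurableSet,
      EuclideanSpace.volume_closedBall]
    rw [Fintype.card_fin]
    rw [show ((2:ℕ):ℝ)/2 + 1 = 2 by norm_num, Real.Gamma_two]
    rw [← ENNReal.ofReal_pow (Real.sqrt_nonneg _), Real.sq_sqrt hs, ← ENNReal.ofReal_mul hs]
    rw [Real.sq_sqrt pi_pos.le, div_one, mul_comm]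

lemma aux_interval (ρ : ℝ) (hρ : ρ ≠ 0) :
    ∫ t in (-1:ℝ)..1, Real.exp (-(ρ*t)) * (1 - t^2)
      = 4/ρ^3 * (ρ * Real.cosh ρ - Real.sinh ρ) := by
  have key : ∀ t : ℝ, HasDerivAt (fun t : ℝ => Real.exp (-(ρ*t)) * (t^2/ρ + 2*t/ρ^2 + (2/ρ^3 - 1/ρ)))
      (Real.exp (-(ρ*t)) * (1 - t^2)) t := by
    intro t
    have h1 : HasDerivAt (fun t : ℝ => -(ρ*t)) (-ρ) t := by
      have h := ((hasDerivAt_id t).const_mul ρ).neg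
      simp only [id, mul_one] at h
      exact h
    have h2 := h1.exp
    have h3 : HasDerivAt (fun t : ℝ => t^2/ρ + 2*t/ρ^2 + (2/ρ^3 - 1/ρ)) (2*t/ρ + 2/ρ^2) t := by
      have := (((hasDerivAt_pow 2 t).div_const ρ).add
        (((hasDerivAt_id t).const_mul 2).div_const (ρ^2))).add_const (2/ρ^3 - 1/ρ)
      exact this.congr_deriv (by norm_num)
    have := h2.mul h3
    exact this.congr_deriv (by field_simp; ring)
  rw [intervalIntegral.integral_eq_sub_of_hasDerivAt (fun t _ => key t)
    (by apply Continuous.intervalIntegrable; continuity)]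
  simp only [Real.cosh_eq, Real.sinh_eq]
  field_simp
  ring

lemma aux_ball3 (ρ : ℝ) (hρ : 0 < ρ) :
    ∫ x in Metric.closedBall (0 : EuclideanSpace ℝ (Fin 3)) 1,
        Real.exp (-(ρ * x 0)) ∂volume
      = π * (4/ρ^3 * (ρ * Real.cosh ρ - Real.sinh ρ)) := by
  -- step 1: to Pi type
  rw [← ((EuclideanSpace.volume_preserving_symm_measurableEquiv_toLp (Fin 3)).symm).setIntegral_preimage_emb
    (MeasurableEquiv.toLp 2 (Fin 3 → ℝ)).symm.symm.measurableEmbedding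
    (fun x => Real.exp (-(ρ * x 0))) _]
  have hset1 : (MeasurableEquiv.toLp 2 (Fin 3 → ℝ)).symm.symm ⁻¹'
      (Metric.closedBall (0 : EuclideanSpace ℝ (Fin 3)) 1)
      = {y : Fin 3 → ℝ | ∑ i, y i ^ 2 ≤ 1} := by
    ext y
    simp only [Set.mem_preimage, Metric.mem_closedBall, dist_zero_right, Set.mem_setOf_eq,
      EuclideanSpace.norm_eq, Real.norm_eq_abs, sq_abs]
    have hyv : ∀ i, ((MeasurableEquiv.toLp 2 (Fin 3 → ℝ)).symm.symm y) i = y i := fun i => rfl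
    simp_rw [hyv]
    constructor
    · intro h
      calc ∑ i, y i ^ 2 = Real.sqrt (∑ i, y i ^2) ^ 2 := by
            rw [Real.sq_sqrt (Finset.sum_nonneg fun i _ => sq_nonneg _)]
        _ ≤ 1 ^ 2 := pow_le_pow_left₀ (Real.sqrt_nonneg _) h 2
        _ = 1 := one_pow 2
    · intro h
      rw [show (1:ℝ) = Real.sqrt 1 by simp]
      exact Real.sqrt_le_sqrt (by simpa using h)
  have happ1 : ∀ y : Fin 3 → ℝ, ((MeasurableEquiv.toLp 2 (Fin 3 → ℝ)).symm.symm y) 0 = y 0 :=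
    fun _ => rfl
  simp_rw [hset1, happ1]
  -- step 2: split off first coordinate
  rw [← ((MeasureTheory.volume_preserving_piFinSuccAbove (fun _ : Fin 3 => ℝ) 0).symm).setIntegral_preimage_emb
    (MeasurableEquiv.piFinSuccAbove (fun _ : Fin 3 => ℝ) 0).symm.measurableEmbedding
    (fun y => Real.exp (-(ρ * y 0))) _]
  have hins : ∀ z : ℝ × (Fin 2 → ℝ),
      (MeasurableEquiv.piFinSuccAbove (fun _ : Fin 3 => ℝ) 0).symm z
        = Fin.insertNth 0 z.1 z.2 := fun z => rfl
  have hset2 : (MeasurableEquiv.piFinSuccAbove (fun _ : Fin 3 => ℝ) 0).symm ⁻¹'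
      {y : Fin 3 → ℝ | ∑ i, y i ^ 2 ≤ 1}
      = {z : ℝ × (Fin 2 → ℝ) | z.1 ^ 2 + ∑ i, z.2 i ^ 2 ≤ 1} := by
    ext z
    simp only [Set.mem_preimage, Set.mem_setOf_eq, hins]
    rw [Fin.sum_univ_succAbove _ (0 : Fin 3)]
    simp [Fin.insertNth_apply_same, Fin.insertNth_apply_succAbove]
  have happ2 : ∀ z : ℝ × (Fin 2 → ℝ),
      ((MeasurableEquiv.piFinSuccAbove (fun _ : Fin 3 => ℝ) 0).symm z) 0 = z.1 := by
    intro z; rw [hins]; exact @Fin.insertNth_apply_same 2 (fun _ => ℝ) 0 z.1 z.2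
  simp_rw [hset2, happ2]
  -- step 3: Fubini via indicator
  set S : Set (ℝ × (Fin 2 → ℝ)) := {z : ℝ × (Fin 2 → ℝ) | z.1 ^ 2 + ∑ i, z.2 i ^ 2 ≤ 1} with hS
  have hSmeas : MeasurableSet S := by
    apply measurableSet_le _ measurable_const
    exact (measurable_fst.pow_const 2).add (Finset.measurable_sum _
      fun i _ => (measurable_snd.eval).pow_const 2)
  have hSsub : S ⊆ Set.Icc (-1:ℝ) 1 ×ˢ {y : Fin 2 → ℝ | ∑ i, y i ^ 2 ≤ 1} := by
    rintro ⟨t, y⟩ hz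
    simp only [hS, Set.mem_setOf_eq] at hz
    have hy : 0 ≤ ∑ i, y i ^ 2 := Finset.sum_nonneg fun i _ => sq_nonneg _
    constructor
    · constructor <;> nlinarith [sq_nonneg (t+1), sq_nonneg (t-1)]
    · simp only [Set.mem_setOf_eq]; nlinarith
  have hSfin : volume S ≠ ⊤ := by
    refine ne_top_of_le_ne_top ?_ (measure_mono hSsub)
    rw [MeasureTheory.Measure.volume_eq_prod, Measure.prod_prod, aux_disk]
    exact ENNReal.mul_ne_top (by simp) ENNReal.ofReal_ne_top
  have hint : Integrable (S.indicator (fun z : ℝ × (Fin 2 → ℝ) => Real.exp (-(ρ * z.1)))) volume := by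
    rw [integrable_indicator_iff hSmeas]
    apply Measure.integrableOn_of_bounded hSfin
    · exact (Real.continuous_exp.comp ((continuous_const.mul continuous_fst).neg)).aestronglyMeasurable
    · refine (ae_restrict_mem hSmeas).mono fun z hz => ?_
      simp only [hS, Set.mem_setOf_eq] at hz
      have hy : 0 ≤ ∑ i, z.2 i ^ 2 := Finset.sum_nonneg fun i _ => sq_nonneg _
      have h1 : -1 ≤ z.1 := by nlinarith [sq_nonneg (z.1+1)]
      rw [Real.norm_eq_abs, Real.abs_exp]
      exact Real.exp_le_exp.2 (by nlinarith)
  rw [← integral_indicator hSmeas, MeasureTheory.Measure.volume_eq_prod, integral_prod _ hint]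
  -- step 4: inner integral
  have hinner : ∀ t : ℝ, (∫ y : Fin 2 → ℝ,
      S.indicator (fun z : ℝ × (Fin 2 → ℝ) => Real.exp (-(ρ * z.1))) (t, y) ∂volume)
      = Real.exp (-(ρ * t)) * (π * (1 - t^2)) * (Set.Icc (-1:ℝ) 1).indicator 1 t := by
    intro t
    have hfe : (fun y : Fin 2 → ℝ =>
        S.indicator (fun z : ℝ × (Fin 2 → ℝ) => Real.exp (-(ρ * z.1))) (t, y))
        = ({y : Fin 2 → ℝ | ∑ i, y i ^ 2 ≤ 1 - t^2}).indicator
            (fun _ => Real.exp (-(ρ * t))) := by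
      ext y
      simp only [Set.indicator_apply, hS, Set.mem_setOf_eq]
      congr 1
      simp only [eq_iff_iff]
      constructor <;> intro h <;> linarith
    rw [hfe, MeasureTheory.integral_indicator_const _ (by
      apply measurableSet_le _ measurable_const
      exact Finset.measurable_sum _ fun i _ => (measurable_pi_apply i).pow_const 2)]
    rw [measureReal_def, aux_disk]
    rcases le_or_gt t 1 with h1 | h1
    · rcases le_or_gt (-1) t with h2 | h2
      · have hmem : t ∈ Set.Icc (-1:ℝ) 1 := ⟨h2, h1⟩
        have hnn : 0 ≤ π * (1 - t^2) := by
          apply mul_nonneg pi_pos.le; nlinarith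
        rw [Set.indicator_of_mem hmem, ENNReal.toReal_ofReal hnn]
        simp [mul_comm]
      · have hmem : t ∉ Set.Icc (-1:ℝ) 1 := by simp [Set.mem_Icc]; intro h; linarith
        have hneg : π * (1 - t^2) ≤ 0 := by
          apply mul_nonpos_of_nonneg_of_nonpos pi_pos.le; nlinarith
        rw [Set.indicator_of_notMem hmem, ENNReal.ofReal_eq_zero.2 hneg]
        simp
    · have hmem : t ∉ Set.Icc (-1:ℝ) 1 := by simp [Set.mem_Icc]; intro h; linarith
      have hneg : π * (1 - t^2) ≤ 0 := by
        apply mul_nonpos_of_nonneg_of_nonpos pi_pos.le; nlinarith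
      rw [Set.indicator_of_notMem hmem, ENNReal.ofReal_eq_zero.2 hneg]
      simp
  simp_rw [hinner]
  -- step 5: reduce to interval integral
  have hform : (fun t : ℝ => Real.exp (-(ρ * t)) * (π * (1 - t^2)) *
      (Set.Icc (-1:ℝ) 1).indicator 1 t)
      = (Set.Icc (-1:ℝ) 1).indicator (fun t => π * (Real.exp (-(ρ * t)) * (1 - t^2))) := by
    ext t
    by_cases ht : t ∈ Set.Icc (-1:ℝ) 1
    · rw [Set.indicator_of_mem ht, Set.indicator_of_mem ht]; simp; ring
    · rw [Set.indicator_of_notMem ht, Set.indicator_of_notMem ht]; simp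
  rw [hform, integral_indicator measurableSet_Icc, MeasureTheory.integral_Icc_eq_integral_Ioc,
    ← intervalIntegral.integral_of_le (by norm_num : (-1:ℝ) ≤ 1),
    intervalIntegral.integral_const_mul, aux_interval ρ hρ.ne']

theorem ball_average_exp_inner (ζ : EuclideanSpace ℝ (Fin 3)) (ρ : ℝ)
    (hρ : 0 < ρ) (hζ : ‖ζ‖ = ρ) :
    (⨍ u in Metric.closedBall (0 : EuclideanSpace ℝ (Fin 3)) 1,
        Real.exp (-(inner ℝ ζ u : ℝ)) ∂volume)
      = (3 / ρ ^ 3) * (ρ * Real.cosh ρ - Real.sinh ρ) := by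
  set v : EuclideanSpace ℝ (Fin 3) := ρ⁻¹ • ζ with hv
  have hvnorm : ‖v‖ = 1 := by
    rw [hv, norm_smul, hζ, Real.norm_eq_abs, abs_of_pos (inv_pos.2 hρ), inv_mul_cancel₀ hρ.ne']
  haveI : Subsingleton ↥({(0:Fin 3)} : Set (Fin 3)) :=
    ⟨fun a b => Subtype.ext ((Set.mem_singleton_iff.1 a.2).trans
      (Set.mem_singleton_iff.1 b.2).symm)⟩
  have hon : Orthonormal ℝ (Set.restrict {(0:Fin 3)} (fun _ : Fin 3 => v)) :=
    ⟨fun _ => hvnorm, fun i j hij => absurd (Subsingleton.elim i j) hij⟩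
  obtain ⟨b, hb⟩ := hon.exists_orthonormalBasis_extension_of_card_eq (by simp)
  have hb0 : b 0 = v := hb 0 rfl
  have hrepr : ∀ u : EuclideanSpace ℝ (Fin 3), (inner ℝ ζ u : ℝ) = ρ * (b.repr u 0) := by
    intro u
    rw [b.repr_apply_apply, hb0, hv, real_inner_smul_left, ← mul_assoc,
      mul_inv_cancel₀ hρ.ne', one_mul]
  rw [setAverage_eq]
  simp_rw [hrepr]
  have hpre : Metric.closedBall (0 : EuclideanSpace ℝ (Fin 3)) 1
      = b.repr ⁻¹' (Metric.closedBall (0 : EuclideanSpace ℝ (Fin 3)) 1) := by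
    ext x
    simp [Metric.mem_closedBall, dist_zero_right]
  rw [hpre, (b.measurePreserving_repr).setIntegral_preimage_emb
    b.repr.toHomeomorph.measurableEmbedding (fun x => Real.exp (-(ρ * x 0))) _,
    aux_ball3 ρ hρ]
  rw [← hpre, measureReal_def, EuclideanSpace.volume_closedBall, Fintype.card_fin]
  have hΓ : Real.Gamma (((3:ℕ):ℝ) / 2 + 1) = 3/4 * Real.sqrt π := by
    rw [show ((3:ℕ):ℝ)/2 + 1 = 3/2 + 1 by norm_num,
      Real.Gamma_add_one (by norm_num : (3/2:ℝ) ≠ 0),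
      show (3/2:ℝ) = 1/2 + 1 by norm_num,
      Real.Gamma_add_one (by norm_num : (1/2:ℝ) ≠ 0),
      Real.Gamma_one_half_eq]
    ring
  rw [hΓ]
  have hsqrtpi : Real.sqrt π > 0 := Real.sqrt_pos.2 pi_pos
  have hval : Real.sqrt π ^ 3 / (3/4 * Real.sqrt π) = 4/3 * π := by
    rw [show Real.sqrt π ^ 3 = Real.sqrt π ^ 2 * Real.sqrt π by ring, Real.sq_sqrt pi_pos.le]
    field_simp
  rw [hval]
  rw [ENNReal.ofReal_one, one_pow, one_mul,
    ENNReal.toReal_ofReal (by positivity : (0:ℝ) ≤ 4/3 * π), smul_eq_mul]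
  have hπ : π ≠ 0 := pi_pos.ne'
  field_simp
end

section
/- Fix v > 0, τ > 0, and let H : [0,∞) → ℝ be defined by H(ρ) = 4πv·I_0(ρ)/(1 − ν·π·(2/ρ)·I_1(ρ)) (with the convention (2/ρ)I_1(ρ) = 1 at ρ = 0), where 0 < ν < 1/π. Define θ(ρ) = √((τ + ν H(ρ))² + ρ²v²) − τ. Then as ν → 0, the minimum over ρ > 0 of θ(ρ)/ρ is O(√ν); more precisely it equals v·√(2νH(0)/τ) + O(ν^{3/2}). -/
open Real Filter Asymptotics


/-- Modified Bessel function of the first kind of order 0. -/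
noncomputable def besselI0 (x : ℝ) : ℝ :=
  ∑' k : ℕ, (x / 2) ^ (2 * k) / ((Nat.factorial k : ℝ)) ^ 2

/-- Modified Bessel function of the first kind of order 1. -/
noncomputable def besselI1 (x : ℝ) : ℝ :=
  ∑' k : ℕ, (x / 2) ^ (2 * k + 1) / ((Nat.factorial (k + 1) : ℝ) * (Nat.factorial k : ℝ))

/-- `(2/ρ) I₁(ρ)`, extended by continuity with value `1` at `ρ = 0`. -/
noncomputable def besselRatio (ρ : ℝ) : ℝ :=
  if ρ = 0 then 1 else (2 / ρ) * besselI1 ρ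

lemma fact_pos_real (k : ℕ) : (0:ℝ) < (k.factorial : ℝ) := by
  exact_mod_cast k.factorial_pos

lemma summable_aux (y : ℝ) (hy : 0 ≤ y) (c : ℕ → ℝ) (hc : ∀ k, (k.factorial : ℝ) ≤ c k) :
    Summable (fun k : ℕ => y ^ k / c k) := by
  have hcpos : ∀ k, (0:ℝ) < c k := fun k => lt_of_lt_of_le (fact_pos_real k) (hc k)
  apply Summable.of_nonneg_of_le (fun k => div_nonneg (pow_nonneg hy k) (hcpos k).le)
    (fun k => div_le_div_of_nonneg_left (pow_nonneg hy k) (fact_pos_real k) (hc k))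
    (Real.summable_pow_div_factorial y)

lemma tsum_aux_ge_one (y : ℝ) (hy : 0 ≤ y) (c : ℕ → ℝ) (hc : ∀ k, (k.factorial : ℝ) ≤ c k)
    (hc0 : c 0 = 1) : 1 ≤ ∑' k : ℕ, y ^ k / c k := by
  have hcpos : ∀ k, (0:ℝ) < c k := fun k => lt_of_lt_of_le (fact_pos_real k) (hc k)
  have h := Summable.le_tsum (summable_aux y hy c hc) 0
    (fun k _ => div_nonneg (pow_nonneg hy k) (hcpos k).le)
  simpa [hc0] using h

lemma tsum_aux_le_geom (y : ℝ) (hy : 0 ≤ y) (hy1 : y < 1) (c : ℕ → ℝ)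
    (hc : ∀ k, (k.factorial : ℝ) ≤ c k) (hc1 : ∀ k, (1:ℝ) ≤ c k) :
    ∑' k : ℕ, y ^ k / c k ≤ (1 - y)⁻¹ := by
  have := tsum_geometric_of_lt_one hy hy1
  rw [← this]
  apply Summable.tsum_le_tsum (fun k => ?_) (summable_aux y hy c hc) (summable_geometric_of_lt_one hy hy1)
  calc y ^ k / c k ≤ y ^ k / 1 := div_le_div_of_nonneg_left (pow_nonneg hy k) one_pos (hc1 k)
  _ = y ^ k := div_one _

lemma tsum_aux_mono (y z : ℝ) (hy : 0 ≤ y) (hyz : y ≤ z) (c : ℕ → ℝ)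
    (hc : ∀ k, (k.factorial : ℝ) ≤ c k) :
    ∑' k : ℕ, y ^ k / c k ≤ ∑' k : ℕ, z ^ k / (k.factorial : ℝ) := by
  apply Summable.tsum_le_tsum (fun k => ?_) (summable_aux y hy c hc) (Real.summable_pow_div_factorial z)
  apply div_le_div₀ (pow_nonneg (hy.trans hyz) k) (pow_le_pow_left₀ hy hyz k) (fact_pos_real k) (hc k)


lemma besselI0_eq (x : ℝ) :
    besselI0 x = ∑' k : ℕ, ((x/2)^2) ^ k / ((Nat.factorial k : ℝ))^2 := by
  unfold besselI0
  congr 1; funext k; rw [← pow_mul]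

lemma besselRatio_eq (ρ : ℝ) :
    besselRatio ρ = ∑' k : ℕ, ((ρ/2)^2) ^ k /
      ((Nat.factorial (k + 1) : ℝ) * (Nat.factorial k : ℝ)) := by
  unfold besselRatio
  split_ifs with h
  · subst h
    rw [tsum_eq_single 0 (fun k hk => by
      simp [zero_pow, pow_eq_zero_iff, hk])]
    norm_num
  · unfold besselI1
    rw [← tsum_mul_left]
    congr 1; funext k
    rw [← mul_div_assoc]
    congr 1
    have : (ρ/2) ^ (2*k+1) = ((ρ/2)^2)^k * (ρ/2) := by rw [← pow_mul]; ring
    rw [this]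
    field_simp

lemma fact_le_one_real' (k : ℕ) : (1:ℝ) ≤ (k.factorial : ℝ) := by
  exact_mod_cast k.factorial_pos

lemma fact_le_sq (k : ℕ) : (k.factorial:ℝ) ≤ ((k.factorial:ℝ))^2 := by
  nlinarith [fact_le_one_real' k, fact_pos_real k]

lemma fact_le_mul (k : ℕ) : (k.factorial:ℝ) ≤ ((k+1).factorial:ℝ) * (k.factorial:ℝ) := by
  nlinarith [fact_le_one_real' k, fact_le_one_real' (k+1), fact_pos_real k]

lemma one_le_sq_fact (k : ℕ) : (1:ℝ) ≤ ((k.factorial:ℝ))^2 := by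
  nlinarith [fact_le_one_real' k]

lemma one_le_mul_fact (k : ℕ) : (1:ℝ) ≤ ((k+1).factorial:ℝ) * (k.factorial:ℝ) := by
  nlinarith [fact_le_one_real' k, fact_le_one_real' (k+1)]

lemma one_le_besselI0 (x : ℝ) : 1 ≤ besselI0 x := by
  rw [besselI0_eq]
  have := tsum_aux_ge_one ((x/2)^2) (by positivity) (fun k => ((k.factorial:ℝ))^2)
    fact_le_sq (by norm_num [Nat.factorial])
  exact this

lemma one_le_besselRatio (ρ : ℝ) : 1 ≤ besselRatio ρ := by
  rw [besselRatio_eq]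
  exact tsum_aux_ge_one ((ρ/2)^2) (by positivity)
    (fun k => ((k+1).factorial:ℝ) * (k.factorial:ℝ)) fact_le_mul (by norm_num [Nat.factorial])

lemma besselI0_le (x : ℝ) (h : x^2 ≤ 1) : besselI0 x ≤ 1 + x^2 := by
  rw [besselI0_eq]
  have h1 : ((x/2)^2) < 1 := by nlinarith
  have h2 := tsum_aux_le_geom ((x/2)^2) (by positivity) h1 (fun k => ((k.factorial:ℝ))^2)
    fact_le_sq one_le_sq_fact
  refine h2.trans ?_
  rw [inv_eq_one_div, div_le_iff₀ (by nlinarith)]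
  nlinarith [sq_nonneg x, sq_nonneg (x^2)]

lemma besselRatio_le (ρ : ℝ) (h : ρ^2 ≤ 1) : besselRatio ρ ≤ 1 + ρ^2 := by
  rw [besselRatio_eq]
  have h1 : ((ρ/2)^2) < 1 := by nlinarith
  have h2 := tsum_aux_le_geom ((ρ/2)^2) (by positivity) h1
    (fun k => ((k+1).factorial:ℝ) * (k.factorial:ℝ)) fact_le_mul one_le_mul_fact
  refine h2.trans ?_
  rw [inv_eq_one_div, div_le_iff₀ (by nlinarith)]
  nlinarith [sq_nonneg ρ, sq_nonneg (ρ^2)]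

lemma besselRatio_le_M (ρ R : ℝ) (h : ρ^2 ≤ R^2) :
    besselRatio ρ ≤ ∑' k : ℕ, (R^2/4)^k / (k.factorial:ℝ) := by
  rw [besselRatio_eq]
  exact tsum_aux_mono ((ρ/2)^2) (R^2/4) (by positivity) (by nlinarith)
    (fun k => ((k+1).factorial:ℝ) * (k.factorial:ℝ)) fact_le_mul

lemma M_ge_one (R : ℝ) : 1 ≤ ∑' k : ℕ, (R^2/4)^k / (k.factorial:ℝ) :=
  tsum_aux_ge_one (R^2/4) (by positivity) _ (fun k => le_refl _) (by norm_num [Nat.factorial])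

lemma sqrt_lower (a t x : ℝ) (ht : 0 < t) (hta : t ≤ a) (hx : 0 ≤ x) :
    t + Real.sqrt (a^2 - t^2) / a * x ≤ Real.sqrt (a^2 + x^2) := by
  have ha : 0 < a := ht.trans_le hta
  have hs : 0 ≤ a^2 - t^2 := by nlinarith
  set s := Real.sqrt (a^2 - t^2) with hs_def
  have hs0 : 0 ≤ s := Real.sqrt_nonneg _
  have hs2 : s^2 = a^2 - t^2 := Real.sq_sqrt hs
  have hpos : 0 < t + s / a * x := by positivity
  refine (Real.le_sqrt' hpos).mpr ?_
  have key : (a*t + s*x)^2 ≤ a^2*(a^2+x^2) := by nlinarith [sq_nonneg (a*s - t*x)]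
  have heq : t + s/a*x = (a*t + s*x)/a := by field_simp
  rw [heq, div_pow, div_le_iff₀ (by positivity)]
  nlinarith [key]

lemma sqrt_sub_sqrt_le (p q r : ℝ) (hq : 0 ≤ q) (hpq : q ≤ p) (hr : 0 < r) (hrp : r^2 ≤ p) :
    Real.sqrt p - Real.sqrt q ≤ (p - q) / r := by
  have h1 : r ≤ Real.sqrt p := (Real.le_sqrt hr.le (hq.trans hpq)).mpr hrp
  have h2 : Real.sqrt q ≤ Real.sqrt p := Real.sqrt_le_sqrt hpq
  rw [le_div_iff₀ hr]
  calc (Real.sqrt p - Real.sqrt q) * r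
      ≤ (Real.sqrt p - Real.sqrt q) * (Real.sqrt p + Real.sqrt q) := by
        nlinarith [Real.sqrt_nonneg q]
  _ = Real.sqrt p ^ 2 - Real.sqrt q ^ 2 := by ring
  _ = p - q := by rw [Real.sq_sqrt hq, Real.sq_sqrt (hq.trans hpq)]

-- S3 combined: monotone in first arg and shift bound
lemma sqrt_shift (a d x : ℝ) (ha : 0 ≤ a) (hd : 0 ≤ d) :
    Real.sqrt ((a+d)^2 + x^2) ≤ Real.sqrt (a^2 + x^2) + d := by
  have h1 : a ≤ Real.sqrt (a^2 + x^2) := by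
    have h0 : a^2 ≤ a^2 + x^2 := by nlinarith [sq_nonneg x]
    have := Real.sqrt_le_sqrt h0
    rwa [Real.sqrt_sq ha] at this
  have h2 : (a+d)^2 + x^2 ≤ (Real.sqrt (a^2+x^2) + d)^2 := by
    have h3 : Real.sqrt (a^2+x^2) ^ 2 = a^2 + x^2 := Real.sq_sqrt (by positivity)
    nlinarith
  calc Real.sqrt ((a+d)^2 + x^2) ≤ Real.sqrt ((Real.sqrt (a^2+x^2) + d)^2) :=
        Real.sqrt_le_sqrt h2
  _ = Real.sqrt (a^2+x^2) + d := Real.sqrt_sq (by positivity)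

lemma sqrt_mono_sq (a b x : ℝ) (ha : 0 ≤ a) (hab : a ≤ b) :
    Real.sqrt (a^2 + x^2) ≤ Real.sqrt (b^2 + x^2) :=
  Real.sqrt_le_sqrt (by nlinarith)


noncomputable def Cconst (v τ : ℝ) : ℝ :=
  (v / τ) * (3 * (8 * Real.pi * v) ^ 2 + 2 * (8 * Real.pi * v) ^ 3 / τ) /
      Real.sqrt (8 * Real.pi * τ * v) +
    256 * Real.pi ^ 2 * τ * v / Real.sqrt (8 * Real.pi * τ * v) +
    v * Real.sqrt (16 * Real.pi * v / τ)

set_option maxHeartbeats 1000000 in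
lemma upper_block (v τ ν b : ℝ) (hv : 0 < v) (hτ : 0 < τ) (hν0 : 0 < ν)
    (h1 : ν ≤ 1) (h2 : ν * Real.pi ≤ 1 / 4) (h3' : 16 * Real.pi * τ * ν ≤ v)
    (hbdef : b * (1 - Real.pi * ν) = 4 * Real.pi * v)
    (hbpos : 0 < b) (hblb : 4 * Real.pi * v ≤ b) (hbub : b ≤ 8 * Real.pi * v)
    (hd2 : 1 / 2 ≤ 1 - Real.pi * ν) :
    ∃ ρs : ℝ, 0 < ρs ∧
      (Real.sqrt ((τ + ν * (4 * Real.pi * v * besselI0 ρs /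
          (1 - ν * Real.pi * besselRatio ρs))) ^ 2 + ρs ^ 2 * v ^ 2) - τ) / ρs ≤
        v * Real.sqrt (2 * ν * b / τ) +
          256 * Real.pi ^ 2 * τ * v / Real.sqrt (8 * Real.pi * τ * v) * (ν * Real.sqrt ν) := by
  have hπ := Real.pi_pos
  set a : ℝ := τ + ν * b with ha
  have haτ : τ ≤ a := by nlinarith
  have hapos : 0 < a := lt_of_lt_of_le hτ haτ
  set r : ℝ := Real.sqrt (2 * τ * ν * b) with hr
  have hrpos : 0 < r := Real.sqrt_pos.mpr (by positivity)
  have hr2 : r ^ 2 = 2 * τ * ν * b := Real.sq_sqrt (by positivity)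
  set ρs : ℝ := r / v with hρs
  have hρspos : 0 < ρs := by positivity
  refine ⟨ρs, hρspos, ?_⟩
  have hu : ρs ^ 2 = 2 * τ * ν * b / v ^ 2 := by rw [hρs, div_pow, hr2]
  have hu0 : 0 ≤ ρs ^ 2 := sq_nonneg _
  have hu1 : ρs ^ 2 ≤ 1 := by
    rw [hu, div_le_one (by positivity)]
    nlinarith [mul_le_mul_of_nonneg_left hbub (show (0:ℝ) ≤ 2 * τ * ν by positivity)]
  have huv : 16 * Real.pi * v * ρs ^ 2 ≤ 256 * Real.pi ^ 2 * τ * ν := by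
    rw [hu]
    rw [show 16 * Real.pi * v * (2 * τ * ν * b / v ^ 2) = 32 * Real.pi * τ * ν * b / v by
      field_simp; ring]
    rw [div_le_iff₀ hv]
    nlinarith [mul_le_mul_of_nonneg_left hbub (show (0:ℝ) ≤ 32 * Real.pi * τ * ν by positivity)]
  have hratle := besselRatio_le ρs hu1
  have hI0le := besselI0_le ρs hu1
  have hrat1 := one_le_besselRatio ρs
  have hI01 := one_le_besselI0 ρs
  have hD1 : (1:ℝ) / 2 ≤ 1 - ν * Real.pi * (1 + ρs ^ 2) := by nlinarith
  have hDs : 1 - ν * Real.pi * (1 + ρs ^ 2) ≤ 1 - ν * Real.pi * besselRatio ρs := by nlinarith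
  have hDspos : 0 < 1 - ν * Real.pi * besselRatio ρs := by linarith
  set Hρ : ℝ := 4 * Real.pi * v * besselI0 ρs / (1 - ν * Real.pi * besselRatio ρs) with hHρ
  have hHpos : 0 ≤ Hρ := div_nonneg (by positivity) hDspos.le
  -- H upper bound
  have step1 : Hρ ≤ 4 * Real.pi * v * (1 + ρs ^ 2) / (1 - ν * Real.pi * (1 + ρs ^ 2)) := by
    rw [hHρ]
    exact div_le_div₀ (by positivity) (by nlinarith) (by linarith) hDs
  have hbeq : b = 4 * Real.pi * v / (1 - Real.pi * ν) := by
    field_simp [show (1 - Real.pi * ν) ≠ 0 by linarith]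
    linarith [hbdef]
  have step2 : 4 * Real.pi * v * (1 + ρs ^ 2) / (1 - ν * Real.pi * (1 + ρs ^ 2)) ≤
      b + 16 * Real.pi * v * ρs ^ 2 := by
    have hident : 4 * Real.pi * v * (1 + ρs ^ 2) / (1 - ν * Real.pi * (1 + ρs ^ 2)) =
        b + 4 * Real.pi * v * ρs ^ 2 / ((1 - ν * Real.pi * (1 + ρs ^ 2)) * (1 - Real.pi * ν)) := by
      rw [hbeq]
      have hA : (1 - ν * Real.pi * (1 + ρs ^ 2)) ≠ 0 := by linarith
      have hB : (1 - Real.pi * ν) ≠ 0 := by linarith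
      rw [div_add_div _ _ hB (mul_ne_zero hA hB), div_eq_div_iff hA (mul_ne_zero hB (mul_ne_zero hA hB))]
      ring
    rw [hident]
    have hden : (1:ℝ) / 4 ≤ (1 - ν * Real.pi * (1 + ρs ^ 2)) * (1 - Real.pi * ν) := by nlinarith
    have : 4 * Real.pi * v * ρs ^ 2 / ((1 - ν * Real.pi * (1 + ρs ^ 2)) * (1 - Real.pi * ν)) ≤
        16 * Real.pi * v * ρs ^ 2 := by
      rw [div_le_iff₀ (by nlinarith)]
      nlinarith [mul_le_mul_of_nonneg_left hden (show (0:ℝ) ≤ 16 * Real.pi * v * ρs ^ 2 by positivity)]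
    linarith
  have hHub : ν * Hρ ≤ ν * b + 256 * Real.pi ^ 2 * τ * ν ^ 2 := by
    have := step1.trans step2
    nlinarith [mul_le_mul_of_nonneg_left huv hν0.le]
  -- sqrt chain
  set δ : ℝ := 256 * Real.pi ^ 2 * τ * ν ^ 2 with hδ
  have hδ0 : 0 ≤ δ := by positivity
  have hx2 : ρs ^ 2 * v ^ 2 = (ρs * v) ^ 2 := by ring
  have hρsv : ρs * v = r := by rw [hρs]; field_simp
  have c1 : Real.sqrt ((τ + ν * Hρ) ^ 2 + (ρs * v) ^ 2) ≤
      Real.sqrt ((a + δ) ^ 2 + (ρs * v) ^ 2) :=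
    sqrt_mono_sq _ _ _ (by positivity) (by rw [ha]; linarith)
  have c2 := sqrt_shift a δ (ρs * v) hapos.le hδ0
  have c3 : Real.sqrt (a ^ 2 + (ρs * v) ^ 2) ≤ τ + 2 * ν * b := by
    rw [hρsv]
    have harg : a ^ 2 + r ^ 2 ≤ (τ + 2 * ν * b) ^ 2 := by
      rw [hr2, ha]
      have hid : (τ + 2 * ν * b) ^ 2 - ((τ + ν * b) ^ 2 + 2 * τ * ν * b) = 3 * (ν * b) ^ 2 := by
        ring
      linarith [sq_nonneg (ν * b), hid]
    have := Real.sqrt_le_sqrt harg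
    rwa [Real.sqrt_sq (by positivity)] at this
  -- T relation
  have hTr : v * Real.sqrt (2 * ν * b / τ) * r = v * (2 * ν * b) := by
    rw [hr, mul_assoc, ← Real.sqrt_mul (by positivity)]
    rw [show 2 * ν * b / τ * (2 * τ * ν * b) = (2 * ν * b) ^ 2 by field_simp]
    rw [Real.sqrt_sq (by positivity)]
  have hTdiv : 2 * ν * b / ρs = v * Real.sqrt (2 * ν * b / τ) := by
    rw [hρs]
    rw [div_div_eq_mul_div, div_eq_iff hrpos.ne', hTr]
    ring
  -- r lower bound
  set srt : ℝ := Real.sqrt (8 * Real.pi * τ * v) with hsrt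
  have hsrtpos : 0 < srt := Real.sqrt_pos.mpr (by positivity)
  have hsν : 0 < Real.sqrt ν := Real.sqrt_pos.mpr hν0
  have hνsq : Real.sqrt ν * Real.sqrt ν = ν := Real.mul_self_sqrt hν0.le
  have hrlb : srt * Real.sqrt ν ≤ r := by
    rw [hsrt, ← Real.sqrt_mul (by positivity) ν, hr]
    apply Real.sqrt_le_sqrt
    have := mul_le_mul_of_nonneg_left hblb (show (0:ℝ) ≤ 2 * τ * ν by positivity)
    linarith
  have hδρ1 : δ / ρs = δ * v / r := by
    rw [hρs, div_div_eq_mul_div]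
  have hδρ2 : δ * v / r ≤ δ * v / (srt * Real.sqrt ν) :=
    div_le_div_of_nonneg_left (by positivity) (by positivity) hrlb
  have hδρ3 : δ * v / (srt * Real.sqrt ν) =
      256 * Real.pi ^ 2 * τ * v / srt * (ν * Real.sqrt ν) := by
    rw [hδ, div_mul_eq_mul_div, div_eq_div_iff (by positivity) (by positivity)]
    linear_combination (-(256 * Real.pi ^ 2 * τ * v * srt * ν)) * hνsq
  -- final assembly
  have key : Real.sqrt ((τ + ν * Hρ) ^ 2 + ρs ^ 2 * v ^ 2) - τ ≤ 2 * ν * b + δ := by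
    rw [hx2]; linarith [c1, c2, c3]
  have key2 : (Real.sqrt ((τ + ν * Hρ) ^ 2 + ρs ^ 2 * v ^ 2) - τ) / ρs ≤
      (2 * ν * b + δ) / ρs := (div_le_div_iff_of_pos_right hρspos).mpr key
  rw [add_div, hTdiv, hδρ1] at key2
  linarith [hδρ2, hδρ3.le, key2]

set_option maxHeartbeats 1000000 in
lemma lower_block (v τ ν b : ℝ) (hv : 0 < v) (hτ : 0 < τ) (hν0 : 0 < ν) (h1 : ν ≤ 1)
    (hbpos : 0 < b) (hblb : 4 * Real.pi * v ≤ b) (hbub : b ≤ 8 * Real.pi * v) :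
    v * Real.sqrt (2 * ν * b / τ) -
        v * (Real.sqrt ((τ + ν * b) ^ 2 - τ ^ 2) / (τ + ν * b)) ≤
      (v / τ) * (3 * (8 * Real.pi * v) ^ 2 + 2 * (8 * Real.pi * v) ^ 3 / τ) /
          Real.sqrt (8 * Real.pi * τ * v) * (ν * Real.sqrt ν) := by
  have hπ := Real.pi_pos
  set a : ℝ := τ + ν * b with ha
  have haτ : τ ≤ a := by nlinarith
  have hapos : 0 < a := lt_of_lt_of_le hτ haτ
  set p : ℝ := 2 * ν * b / τ * a ^ 2 with hp
  set q : ℝ := a ^ 2 - τ ^ 2 with hq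
  have ha2 : τ ^ 2 ≤ a ^ 2 := by nlinarith
  have hq0 : 0 ≤ q := by rw [hq]; linarith
  have hpq : τ * (p - q) = 3 * τ * ν ^ 2 * b ^ 2 + 2 * ν ^ 3 * b ^ 3 := by
    rw [hp, hq, ha]; field_simp; ring
  have hpos3 : (0:ℝ) ≤ 3 * τ * ν ^ 2 * b ^ 2 + 2 * ν ^ 3 * b ^ 3 := by positivity
  have hpq' : p - q = (3 * τ * ν ^ 2 * b ^ 2 + 2 * ν ^ 3 * b ^ 3) / τ := by
    rw [eq_div_iff hτ.ne']; linarith [hpq]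
  have hqp : q ≤ p := by
    have h0 : 0 ≤ p - q := hpq' ▸ div_nonneg hpos3 hτ.le
    linarith
  set r : ℝ := Real.sqrt (2 * τ * ν * b) with hr
  have hrpos : 0 < r := Real.sqrt_pos.mpr (by positivity)
  have hr2 : r ^ 2 = 2 * τ * ν * b := Real.sq_sqrt (by positivity)
  have hτp : τ * p = 2 * ν * b * a ^ 2 := by rw [hp]; field_simp
  have h9 : τ * (2 * τ * ν * b) ≤ τ * p := by
    rw [hτp]
    linarith [mul_le_mul_of_nonneg_left ha2 (show (0:ℝ) ≤ 2 * ν * b by positivity)]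
  have hr2p : r ^ 2 ≤ p := by rw [hr2]; exact le_of_mul_le_mul_left h9 hτ
  have hdiff := sqrt_sub_sqrt_le p q r hq0 hqp hrpos hr2p
  have hTp : v * (Real.sqrt p / a) = v * Real.sqrt (2 * ν * b / τ) := by
    rw [hp, Real.sqrt_mul (by positivity) (a ^ 2), Real.sqrt_sq hapos.le]
    field_simp
  -- bounds on p - q
  have hb2 : b ^ 2 ≤ (8 * Real.pi * v) ^ 2 := by nlinarith
  have hb3 : b ^ 3 ≤ (8 * Real.pi * v) ^ 3 := by nlinarith
  have hν3 : ν ^ 3 ≤ ν ^ 2 := by nlinarith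
  set K : ℝ := 3 * (8 * Real.pi * v) ^ 2 + 2 * (8 * Real.pi * v) ^ 3 / τ with hK
  have hnum : 3 * τ * ν ^ 2 * b ^ 2 + 2 * ν ^ 3 * b ^ 3 ≤
      3 * τ * (8 * Real.pi * v) ^ 2 * ν ^ 2 + 2 * (8 * Real.pi * v) ^ 3 * ν ^ 2 := by
    nlinarith [mul_le_mul_of_nonneg_left hb2 (show (0:ℝ) ≤ 3 * τ * ν ^ 2 by positivity),
      mul_le_mul_of_nonneg_left hb3 (show (0:ℝ) ≤ 2 * ν ^ 3 by positivity),
      mul_le_mul_of_nonneg_left hν3 (show (0:ℝ) ≤ 2 * (8 * Real.pi * v) ^ 3 by positivity)]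
  have hKν : p - q ≤ K * ν ^ 2 := by
    rw [hpq']
    have hKexp : K * ν ^ 2 =
        (3 * τ * (8 * Real.pi * v) ^ 2 * ν ^ 2 + 2 * (8 * Real.pi * v) ^ 3 * ν ^ 2) / τ := by
      rw [hK]; field_simp
    rw [hKexp]
    exact (div_le_div_iff_of_pos_right hτ).mpr hnum
  -- sqrt ν facts
  set srt : ℝ := Real.sqrt (8 * Real.pi * τ * v) with hsrt
  have hsrtpos : 0 < srt := Real.sqrt_pos.mpr (by positivity)
  have hsν : 0 < Real.sqrt ν := Real.sqrt_pos.mpr hν0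
  have hνsq : Real.sqrt ν * Real.sqrt ν = ν := Real.mul_self_sqrt hν0.le
  have hrlb : srt * Real.sqrt ν ≤ r := by
    rw [hsrt, ← Real.sqrt_mul (by positivity) ν, hr]
    apply Real.sqrt_le_sqrt
    have := mul_le_mul_of_nonneg_left hblb (show (0:ℝ) ≤ 2 * τ * ν by positivity)
    linarith
  have e3 : (p - q) / r ≤ K * ν ^ 2 / (srt * Real.sqrt ν) :=
    div_le_div₀ (by positivity) hKν (by positivity) hrlb
  have e4 : K * ν ^ 2 / (srt * Real.sqrt ν) = K / srt * (ν * Real.sqrt ν) := by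
    rw [div_mul_eq_mul_div, div_eq_div_iff (by positivity) (by positivity)]
    linear_combination (-(K * srt * ν)) * hνsq
  -- assemble
  have e1 : v * Real.sqrt (2 * ν * b / τ) - v * (Real.sqrt q / a) =
      v / a * (Real.sqrt p - Real.sqrt q) := by
    rw [← hTp]; ring
  have e2 : v / a * (Real.sqrt p - Real.sqrt q) ≤ v / a * ((p - q) / r) :=
    mul_le_mul_of_nonneg_left hdiff (by positivity)
  have e5 : v / a * ((p - q) / r) ≤ v / τ * ((p - q) / r) :=
    mul_le_mul_of_nonneg_right (div_le_div_of_nonneg_left hv.le hτ haτ)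
      (div_nonneg (by linarith) hrpos.le)
  have e6 : v / τ * ((p - q) / r) ≤ v / τ * (K / srt * (ν * Real.sqrt ν)) := by
    rw [← e4]
    exact mul_le_mul_of_nonneg_left e3 (by positivity)
  have e7 : v / τ * (K / srt * (ν * Real.sqrt ν)) =
      v / τ * K / srt * (ν * Real.sqrt ν) := by ring
  rw [hK] at e7
  linarith [e1, e2, e5, e6, e7.le]


lemma T_bound (v τ ν b : ℝ) (hv : 0 < v) (hτ : 0 < τ) (hν0 : 0 < ν)
    (hb0 : 0 ≤ b) (hbub : b ≤ 8 * Real.pi * v) :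
    v * Real.sqrt (2 * ν * b / τ) ≤ v * Real.sqrt (16 * Real.pi * v / τ) * Real.sqrt ν := by
  have hπ := Real.pi_pos
  have h0 : 2 * ν * b ≤ 16 * Real.pi * v * ν := by
    have := mul_le_mul_of_nonneg_left hbub (show (0:ℝ) ≤ 2 * ν by positivity)
    linarith
  have h : 2 * ν * b / τ ≤ 16 * Real.pi * v / τ * ν := by
    rw [div_mul_eq_mul_div]
    exact (div_le_div_iff_of_pos_right hτ).mpr (by linarith)
  calc v * Real.sqrt (2 * ν * b / τ) ≤ v * Real.sqrt (16 * Real.pi * v / τ * ν) :=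
        mul_le_mul_of_nonneg_left (Real.sqrt_le_sqrt h) hv.le
  _ = v * (Real.sqrt (16 * Real.pi * v / τ) * Real.sqrt ν) := by
        rw [Real.sqrt_mul (by positivity)]
  _ = v * Real.sqrt (16 * Real.pi * v / τ) * Real.sqrt ν := by ring

set_option maxHeartbeats 1000000 in
lemma core (v τ ν M : ℝ) (hv : 0 < v) (hτ : 0 < τ) (hν0 : 0 < ν)
    (h1 : ν ≤ 1) (h2 : ν * Real.pi ≤ 1 / 4) (h3' : 16 * Real.pi * τ * ν ≤ v)
    (h4 : ν * Real.pi * M < 1)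
    (h5' : ν * (64 * Real.pi * τ * v + 256 * Real.pi ^ 2 * v ^ 2) ≤ τ ^ 2)
    (hMb : ∀ ρ : ℝ, ρ ^ 2 ≤ (2 * τ / v) ^ 2 → besselRatio ρ ≤ M) :
    0 ≤ sInf ((fun ρ => (Real.sqrt ((τ + ν * (4 * Real.pi * v * besselI0 ρ /
          (1 - ν * Real.pi * besselRatio ρ))) ^ 2 + ρ ^ 2 * v ^ 2) - τ) / ρ) '' Set.Ioi 0) ∧
    |sInf ((fun ρ => (Real.sqrt ((τ + ν * (4 * Real.pi * v * besselI0 ρ /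
          (1 - ν * Real.pi * besselRatio ρ))) ^ 2 + ρ ^ 2 * v ^ 2) - τ) / ρ) '' Set.Ioi 0)
      - v * Real.sqrt (2 * ν * (4 * Real.pi * v / (1 - Real.pi * ν)) / τ)|
        ≤ Cconst v τ * (ν * Real.sqrt ν) ∧
    v * Real.sqrt (2 * ν * (4 * Real.pi * v / (1 - Real.pi * ν)) / τ)
        ≤ Cconst v τ * Real.sqrt ν := by
  have hπ := Real.pi_pos
  have hd2 : 1 / 2 ≤ 1 - Real.pi * ν := by nlinarith
  have hd1 : 1 - Real.pi * ν ≤ 1 := by nlinarith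
  set b : ℝ := 4 * Real.pi * v / (1 - Real.pi * ν) with hb
  have hbdef : b * (1 - Real.pi * ν) = 4 * Real.pi * v := by
    rw [hb]; field_simp
  have hbpos : 0 < b := by positivity
  have hblb : 4 * Real.pi * v ≤ b := by nlinarith
  have hbub : b ≤ 8 * Real.pi * v := by nlinarith
  set a : ℝ := τ + ν * b with ha
  have haτ : τ ≤ a := by nlinarith
  have hapos : 0 < a := lt_of_lt_of_le hτ haτ
  set T : ℝ := v * Real.sqrt (2 * ν * b / τ) with hT
  set L : ℝ := v * (Real.sqrt (a ^ 2 - τ ^ 2) / a) with hL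
  have hL0 : 0 ≤ L := by positivity
  -- L ≤ v/2
  have hνb8 : ν * b ≤ τ / 8 := by nlinarith [mul_le_mul_of_nonneg_left hbub hν0.le, sq_nonneg v, mul_pos hπ (mul_pos hτ hv)]
  have hνb0 : 0 ≤ ν * b := by positivity
  have hq4 : a ^ 2 - τ ^ 2 ≤ (a / 2) ^ 2 := by nlinarith [hνb8, hνb0, hτ]
  have hsq4 : Real.sqrt (a ^ 2 - τ ^ 2) ≤ a / 2 := by
    have := Real.sqrt_le_sqrt hq4
    rwa [Real.sqrt_sq (by positivity)] at this
  have hL2 : L ≤ v / 2 := by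
    rw [hL]
    have : Real.sqrt (a ^ 2 - τ ^ 2) / a ≤ 1 / 2 := by
      rw [div_le_div_iff₀ hapos (by norm_num)]; linarith
    nlinarith [Real.sqrt_nonneg (a ^ 2 - τ ^ 2)]
  -- pointwise lower bound
  have hlow : ∀ ρ : ℝ, 0 < ρ →
      L ≤ (Real.sqrt ((τ + ν * (4 * Real.pi * v * besselI0 ρ /
          (1 - ν * Real.pi * besselRatio ρ))) ^ 2 + ρ ^ 2 * v ^ 2) - τ) / ρ := by
    intro ρ hρ
    have hI0 := one_le_besselI0 ρ
    have hrat := one_le_besselRatio ρ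
    set Hρ : ℝ := 4 * Real.pi * v * besselI0 ρ / (1 - ν * Real.pi * besselRatio ρ) with hHρ
    have hx2 : ρ ^ 2 * v ^ 2 = (ρ * v) ^ 2 := by ring
    rw [hx2, le_div_iff₀ hρ]
    by_cases hD : 0 < 1 - ν * Real.pi * besselRatio ρ
    · have hDle : 1 - ν * Real.pi * besselRatio ρ ≤ 1 - Real.pi * ν := by nlinarith
      have hHlb : b ≤ Hρ := by
        rw [hHρ, hb]
        exact div_le_div₀ (by positivity) (by nlinarith) hD hDle
      have hax : a ≤ τ + ν * Hρ := by nlinarith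
      have hs1 := sqrt_mono_sq a (τ + ν * Hρ) (ρ * v) hapos.le hax
      have hs2 := sqrt_lower a τ (ρ * v) hτ haτ (by positivity)
      have hLρ : L * ρ = Real.sqrt (a ^ 2 - τ ^ 2) / a * (ρ * v) := by
        rw [hL]; ring
      rw [hLρ]
      linarith
    · push_neg at hD
      have hρR0 : 2 * τ / v < ρ := by
        by_contra hle
        push_neg at hle
        have hM' : besselRatio ρ ≤ M := hMb ρ (by nlinarith)
        nlinarith
      have h6 : ρ * v ≤ Real.sqrt ((τ + ν * Hρ) ^ 2 + (ρ * v) ^ 2) := by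
        have h7 : (ρ * v) ^ 2 ≤ (τ + ν * Hρ) ^ 2 + (ρ * v) ^ 2 := by
          nlinarith [sq_nonneg (τ + ν * Hρ)]
        have := Real.sqrt_le_sqrt h7
        rwa [Real.sqrt_sq (by positivity)] at this
      have hτρ : τ ≤ ρ * v / 2 := by
        rw [div_lt_iff₀ hv] at hρR0; nlinarith
      nlinarith
  -- sInf lower bound
  have hne : ((fun ρ => (Real.sqrt ((τ + ν * (4 * Real.pi * v * besselI0 ρ /
        (1 - ν * Real.pi * besselRatio ρ))) ^ 2 + ρ ^ 2 * v ^ 2) - τ) / ρ) '' Set.Ioi 0).Nonempty :=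
    ⟨_, ⟨1, Set.mem_Ioi.mpr one_pos, rfl⟩⟩
  have hlb' : ∀ y ∈ ((fun ρ => (Real.sqrt ((τ + ν * (4 * Real.pi * v * besselI0 ρ /
        (1 - ν * Real.pi * besselRatio ρ))) ^ 2 + ρ ^ 2 * v ^ 2) - τ) / ρ) '' Set.Ioi 0), L ≤ y := by
    rintro y ⟨ρ, hρ, rfl⟩
    exact hlow ρ (Set.mem_Ioi.mp hρ)
  have hbdd : BddBelow ((fun ρ => (Real.sqrt ((τ + ν * (4 * Real.pi * v * besselI0 ρ /
        (1 - ν * Real.pi * besselRatio ρ))) ^ 2 + ρ ^ 2 * v ^ 2) - τ) / ρ) '' Set.Ioi 0) :=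
    ⟨L, hlb'⟩
  have hInfL : L ≤ sInf ((fun ρ => (Real.sqrt ((τ + ν * (4 * Real.pi * v * besselI0 ρ /
        (1 - ν * Real.pi * besselRatio ρ))) ^ 2 + ρ ^ 2 * v ^ 2) - τ) / ρ) '' Set.Ioi 0) :=
    le_csInf hne hlb'
  -- upper bound
  obtain ⟨ρs, hρspos, hup⟩ := upper_block v τ ν b hv hτ hν0 h1 h2 h3' hbdef hbpos hblb hbub hd2
  have hmem : (Real.sqrt ((τ + ν * (4 * Real.pi * v * besselI0 ρs /
      (1 - ν * Real.pi * besselRatio ρs))) ^ 2 + ρs ^ 2 * v ^ 2) - τ) / ρs ∈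
      ((fun ρ => (Real.sqrt ((τ + ν * (4 * Real.pi * v * besselI0 ρ /
        (1 - ν * Real.pi * besselRatio ρ))) ^ 2 + ρ ^ 2 * v ^ 2) - τ) / ρ) '' Set.Ioi 0) :=
    ⟨ρs, Set.mem_Ioi.mpr hρspos, rfl⟩
  have hup' := (csInf_le hbdd hmem).trans hup
  have hTL := lower_block v τ ν b hv hτ hν0 h1 hbpos hblb hbub
  rw [← ha, ← hL, ← hT] at hTL
  have hTb := T_bound v τ ν b hv hτ hν0 hbpos.le hbub
  rw [← hT] at hTb hup' 
  set C1 : ℝ := (v / τ) * (3 * (8 * Real.pi * v) ^ 2 + 2 * (8 * Real.pi * v) ^ 3 / τ) /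
      Real.sqrt (8 * Real.pi * τ * v) with hC1
  set C2 : ℝ := 256 * Real.pi ^ 2 * τ * v / Real.sqrt (8 * Real.pi * τ * v) with hC2
  set C3 : ℝ := v * Real.sqrt (16 * Real.pi * v / τ) with hC3
  have hCc : Cconst v τ = C1 + C2 + C3 := rfl
  have hC10 : 0 ≤ C1 := by rw [hC1]; positivity
  have hC20 : 0 ≤ C2 := by rw [hC2]; positivity
  have hC30 : 0 ≤ C3 := by rw [hC3]; positivity
  have hsν0 : 0 ≤ Real.sqrt ν := Real.sqrt_nonneg ν
  have hνsν0 : 0 ≤ ν * Real.sqrt ν := by positivity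
  refine ⟨hL0.trans hInfL, ?_, ?_⟩
  · rw [hCc, abs_le]
    constructor
    · linarith only [mul_nonneg hC20 hνsν0, mul_nonneg hC30 hνsν0, hTL, hInfL]
    · linarith only [mul_nonneg hC10 hνsν0, mul_nonneg hC30 hνsν0, hup']
  · rw [hCc]
    linarith only [mul_nonneg hC10 hsν0, mul_nonneg hC20 hsν0, hTb]

lemma master (v τ : ℝ) (hv : 0 < v) (hτ : 0 < τ) :
    ∃ ε C : ℝ, 0 < ε ∧ 0 ≤ C ∧ ∀ ν : ℝ, ν ∈ Set.Ioo (0:ℝ) ε →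
      0 ≤ sInf ((fun ρ => (Real.sqrt ((τ + ν * (4 * π * v * besselI0 ρ /
            (1 - ν * π * besselRatio ρ))) ^ 2 + ρ ^ 2 * v ^ 2) - τ) / ρ) '' Set.Ioi 0) ∧
      |sInf ((fun ρ => (Real.sqrt ((τ + ν * (4 * π * v * besselI0 ρ /
            (1 - ν * π * besselRatio ρ))) ^ 2 + ρ ^ 2 * v ^ 2) - τ) / ρ) '' Set.Ioi 0)
        - v * Real.sqrt (2 * ν * (4 * π * v / (1 - π * ν)) / τ)| ≤ C * (ν * Real.sqrt ν) ∧
      v * Real.sqrt (2 * ν * (4 * π * v / (1 - π * ν)) / τ) ≤ C * Real.sqrt ν := by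
  have hπ := Real.pi_pos
  set M : ℝ := ∑' k : ℕ, ((2 * τ / v) ^ 2 / 4) ^ k / (k.factorial : ℝ) with hM
  have hM1 : 1 ≤ M := M_ge_one (2 * τ / v)
  have hMpos : 0 < M := lt_of_lt_of_le one_pos hM1
  set ε : ℝ := min 1 (min (1 / (4 * π)) (min (v / (16 * π * τ))
      (min (1 / (π * M)) (τ ^ 2 / (64 * π * τ * v + 256 * π ^ 2 * v ^ 2))))) with hε
  have hεpos : 0 < ε := by
    refine lt_min one_pos (lt_min (by positivity) (lt_min (by positivity)
      (lt_min (by positivity) (by positivity))))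
  refine ⟨ε, Cconst v τ, hεpos, ?_, ?_⟩
  · unfold Cconst; positivity
  · rintro ν ⟨hν0, hνε⟩
    have h1 : ν ≤ 1 := le_of_lt (hνε.trans_le (min_le_left _ _))
    have h2' : ν < 1 / (4 * π) :=
      hνε.trans_le ((min_le_right _ _).trans (min_le_left _ _))
    have h3 : ν ≤ v / (16 * π * τ) :=
      le_of_lt (hνε.trans_le ((min_le_right _ _).trans ((min_le_right _ _).trans (min_le_left _ _))))
    have h4' : ν < 1 / (π * M) :=
      hνε.trans_le ((min_le_right _ _).trans ((min_le_right _ _).trans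
        ((min_le_right _ _).trans (min_le_left _ _))))
    have h5 : ν ≤ τ ^ 2 / (64 * π * τ * v + 256 * π ^ 2 * v ^ 2) :=
      le_of_lt (hνε.trans_le ((min_le_right _ _).trans ((min_le_right _ _).trans
        ((min_le_right _ _).trans (min_le_right _ _)))))
    have h2 : ν * π ≤ 1 / 4 := by
      rw [lt_div_iff₀ (by positivity)] at h2'; nlinarith
    have h4 : ν * π * M < 1 := by
      rw [lt_div_iff₀ (by positivity)] at h4'; nlinarith
    have h3' : 16 * π * τ * ν ≤ v := by
      rw [le_div_iff₀ (by positivity)] at h3; nlinarith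
    have h5' : ν * (64 * π * τ * v + 256 * π ^ 2 * v ^ 2) ≤ τ ^ 2 := by
      rw [le_div_iff₀ (by positivity)] at h5; nlinarith
    have hMb : ∀ ρ : ℝ, ρ ^ 2 ≤ (2 * τ / v) ^ 2 → besselRatio ρ ≤ M := by
      intro ρ h
      rw [hM]
      exact besselRatio_le_M ρ (2 * τ / v) h
    exact core v τ ν M hv hτ hν0 h1 h2 h3' h4 h5' hMb

theorem random_walk_speed_bound
    (v τ : ℝ) (hv : 0 < v) (hτ : 0 < τ)
    (H : ℝ → ℝ → ℝ)
    (hH : ∀ ν ρ : ℝ, H ν ρ = 4 * π * v * besselI0 ρ / (1 - ν * π * besselRatio ρ))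
    (θf : ℝ → ℝ → ℝ)
    (hθf : ∀ ν ρ : ℝ,
      θf ν ρ = Real.sqrt ((τ + ν * H ν ρ) ^ 2 + ρ ^ 2 * v ^ 2) - τ)
    (m : ℝ → ℝ)
    (hm : ∀ ν : ℝ, m ν = sInf ((fun ρ => θf ν ρ / ρ) '' Set.Ioi 0)) :
    (m =O[nhdsWithin 0 (Set.Ioi 0)] fun ν => Real.sqrt ν) ∧
    ((fun ν => m ν - v * Real.sqrt (2 * ν * (4 * π * v / (1 - π * ν)) / τ))
      =O[nhdsWithin 0 (Set.Ioi 0)] fun ν => ν * Real.sqrt ν) := by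
  obtain ⟨ε, C, hεpos, hC0, hmain⟩ := master v τ hv hτ
  have hmem : Set.Ioo (0:ℝ) (min ε 1) ∈ nhdsWithin (0:ℝ) (Set.Ioi 0) :=
    Ioo_mem_nhdsGT_of_mem ⟨le_refl 0, lt_min hεpos one_pos⟩
  have hkey : ∀ ν ∈ Set.Ioo (0:ℝ) (min ε 1),
      ‖m ν‖ ≤ 2 * C * ‖Real.sqrt ν‖ ∧
      ‖m ν - v * Real.sqrt (2 * ν * (4 * π * v / (1 - π * ν)) / τ)‖ ≤
        C * ‖ν * Real.sqrt ν‖ := by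
    rintro ν ⟨hν0, hνm⟩
    have hνε : ν < ε := lt_of_lt_of_le hνm (min_le_left _ _)
    have hν1 : ν ≤ 1 := le_of_lt (lt_of_lt_of_le hνm (min_le_right _ _))
    have hfun : (fun ρ => θf ν ρ / ρ) = (fun ρ => (Real.sqrt ((τ + ν * (4 * π * v * besselI0 ρ /
        (1 - ν * π * besselRatio ρ))) ^ 2 + ρ ^ 2 * v ^ 2) - τ) / ρ) := by
      funext ρ; rw [hθf, hH]
    have hmν : m ν = sInf ((fun ρ => (Real.sqrt ((τ + ν * (4 * π * v * besselI0 ρ /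
        (1 - ν * π * besselRatio ρ))) ^ 2 + ρ ^ 2 * v ^ 2) - τ) / ρ) '' Set.Ioi 0) := by
      rw [hm, hfun]
    obtain ⟨h0, habs, hTb⟩ := hmain ν ⟨hν0, hνε⟩
    rw [← hmν] at h0 habs
    have hsν : 0 ≤ Real.sqrt ν := Real.sqrt_nonneg ν
    have hνsν : 0 ≤ ν * Real.sqrt ν := mul_nonneg hν0.le hsν
    have hT0 : 0 ≤ v * Real.sqrt (2 * ν * (4 * π * v / (1 - π * ν)) / τ) := by positivity
    constructor
    · rw [Real.norm_eq_abs, Real.norm_eq_abs, abs_of_nonneg h0, abs_of_nonneg hsν]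
      have h6 : ν * Real.sqrt ν ≤ Real.sqrt ν := by nlinarith
      have h7 := abs_le.mp habs
      have h8 : C * (ν * Real.sqrt ν) ≤ C * Real.sqrt ν :=
        mul_le_mul_of_nonneg_left h6 hC0
      linarith [h7.2, hTb]
    · rw [Real.norm_eq_abs, Real.norm_eq_abs, abs_of_nonneg hνsν]
      exact habs
  constructor
  · rw [isBigO_iff]
    exact ⟨2 * C, by filter_upwards [hmem] with ν hν using (hkey ν hν).1⟩
  · rw [isBigO_iff]
    exact ⟨C, by filter_upwards [hmem] with ν hν using (hkey ν hν).2⟩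
end
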